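/- Let n ≥ 5 be odd, let V be a left K-vector space over a division ring K with finrank V = n + 1, and set m = (n−1)/2. For all lines a₁, b₁ of V the following are equivalent: (i) a₁ = b₁ or a₁ ⊓ b₁ = ⊥; (ii) a₁ = b₁, or there exist lines a₂, …, a_m such that for every line g there exist lines b₂, …, b_{m+1} and c₂, …, c_{m+1} with (setting c₁ := b₁): for each 2 ≤ i ≤ m+1, bᵢ meets a_{i−1} and b_{i−1} in two distinct points and cᵢ meets a_{i−1} and c_{i−1} in two distinct points; and b_{m+1} ∼ g, c_{m+1} ∼ g and b_{m+1} ⊓ g ≠ c_{m+1} ⊓ g. -/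

import Mathlib

/-- `a` is a projective line: a submodule of finrank 2. -/
def PLine {K V : Type*} [DivisionRing K] [AddCommGroup V] [Module K V]
    (a : Submodule K V) : Prop := Module.finrank K a = 2

/-- Two lines intersect: they are different and have nontrivial intersection. -/
def PMeets {K V : Type*} [DivisionRing K] [AddCommGroup V] [Module K V]
    (a b : Submodule K V) : Prop := a ≠ b ∧ a ⊓ b ≠ ⊥

/-- `x` meets the lines `y` and `z` in two distinct points. -/
def PMeetsTwo {K V : Type*} [DivisionRing K] [AddCommGroup V] [Module K V]
    (x y z : Submodule K V) : Prop := PMeets x y ∧ PMeets x z ∧ x ⊓ y ≠ x ⊓ z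

set_option linter.unusedSectionVars false

section Aux

open Submodule Module

variable {K V : Type*} [DivisionRing K] [AddCommGroup V] [Module K V]
  [FiniteDimensional K V]

lemma st4_finrank_pos {p : Submodule K V} (h : p ≠ ⊥) : 1 ≤ finrank K p := by
  rcases Nat.eq_zero_or_pos (finrank K p) with h0 | h1
  · exact absurd (Submodule.finrank_eq_zero.mp h0) h
  · exact h1

lemma st4_span_singleton_inf {v w : V} (hw : w ∉ (K ∙ v)) :
    (K ∙ v) ⊓ (K ∙ w) = ⊥ := by
  rw [eq_bot_iff]
  rintro x ⟨hx1, hx2⟩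
  obtain ⟨d, rfl⟩ := Submodule.mem_span_singleton.mp hx2
  rcases eq_or_ne d 0 with rfl | hd
  · simp
  · exfalso
    apply hw
    have : w = d⁻¹ • (d • w) := by rw [smul_smul, inv_mul_cancel₀ hd, one_smul]
    rw [this]
    exact Submodule.smul_mem _ _ hx1

/-- The key computation for a span of a pair taken from two "independent" submodules. -/
lemma st4_pairLine {U A : Submodule K V} (hUA : U ⊓ A = ⊥) {r s : V}
    (hr : r ∈ U) (hr0 : r ≠ 0) (hs : s ∈ A) (hs0 : s ≠ 0) :
    PLine (Submodule.span K {r, s}) ∧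
      ((Submodule.span K {r, s}) ⊓ U = (K ∙ r)) ∧
      ((Submodule.span K {r, s}) ⊓ A = (K ∙ s)) := by
  have hrA : r ∉ A := fun h => hr0 (by
    have : r ∈ U ⊓ A := ⟨hr, h⟩
    rwa [hUA, Submodule.mem_bot] at this)
  have hsU : s ∉ U := fun h => hs0 (by
    have : s ∈ U ⊓ A := ⟨h, hs⟩
    rwa [hUA, Submodule.mem_bot] at this)
  have hrL : r ∈ Submodule.span K {r, s} :=
    Submodule.subset_span (Set.mem_insert _ _)
  have hsL : s ∈ Submodule.span K {r, s} :=
    Submodule.subset_span (Set.mem_insert_of_mem _ rfl)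
  have hinfU : (Submodule.span K {r, s}) ⊓ U = K ∙ r := by
    apply le_antisymm
    · rintro x ⟨hx1, hx2⟩
      obtain ⟨c, d, rfl⟩ := Submodule.mem_span_pair.mp hx1
      have hds : d • s ∈ U := by
        have : d • s = (c • r + d • s) - c • r := by abel
        rw [this]
        exact Submodule.sub_mem _ hx2 (Submodule.smul_mem _ _ hr)
      have hds0 : d • s = 0 := by
        have : d • s ∈ U ⊓ A := ⟨hds, Submodule.smul_mem _ _ hs⟩
        rwa [hUA, Submodule.mem_bot] at this
      rw [hds0, add_zero]
      exact Submodule.mem_span_singleton.mpr ⟨c, rfl⟩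
    · exact le_inf ((Submodule.span_singleton_le_iff_mem _ _).mpr hrL)
        ((Submodule.span_singleton_le_iff_mem _ _).mpr hr)
  have hinfA : (Submodule.span K {r, s}) ⊓ A = K ∙ s := by
    apply le_antisymm
    · rintro x ⟨hx1, hx2⟩
      obtain ⟨c, d, rfl⟩ := Submodule.mem_span_pair.mp hx1
      have hcr : c • r ∈ A := by
        have : c • r = (c • r + d • s) - d • s := by abel
        rw [this]
        exact Submodule.sub_mem _ hx2 (Submodule.smul_mem _ _ hs)
      have hcr0 : c • r = 0 := by
        have : c • r ∈ U ⊓ A := ⟨Submodule.smul_mem _ _ hr, hcr⟩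
        rwa [hUA, Submodule.mem_bot] at this
      rw [hcr0, zero_add]
      exact Submodule.mem_span_singleton.mpr ⟨d, rfl⟩
    · exact le_inf ((Submodule.span_singleton_le_iff_mem _ _).mpr hsL)
        ((Submodule.span_singleton_le_iff_mem _ _).mpr hs)
  refine ⟨?_, hinfU, hinfA⟩
  have hspan : Submodule.span K {r, s} = (K ∙ r) ⊔ (K ∙ s) :=
    Submodule.span_insert r {s}
  have hinf : (K ∙ r) ⊓ (K ∙ s) = ⊥ := by
    apply st4_span_singleton_inf
    intro hs'
    exact hsU (Submodule.mem_span_singleton.mp hs' |>.elim fun c hc => by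
      rw [← hc]; exact Submodule.smul_mem _ _ hr)
  have := Submodule.finrank_sup_add_finrank_inf_eq (K ∙ r) (K ∙ s)
  rw [hinf, finrank_bot, finrank_span_singleton hr0, finrank_span_singleton hs0] at this
  unfold PLine
  rw [hspan]
  omega

lemma st4_line_eq_of_le {x y : Submodule K V} (hx : PLine x) (hy : PLine y)
    (h : x ≤ y) : x = y :=
  Submodule.eq_of_le_of_finrank_le h (by rw [hx, hy])

/-- intersection of a line with smaller line through a common nonzero point. -/
lemma st4_inf_line {L g : Submodule K V} (hL : PLine L) (hg : PLine g) (hne : L ≠ g)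
    {u : V} (huL : u ∈ L) (hug : u ∈ g) (hu0 : u ≠ 0) :
    PMeets L g ∧ L ⊓ g = K ∙ u := by
  have huLg : (K ∙ u) ≤ L ⊓ g := le_inf
    ((Submodule.span_singleton_le_iff_mem _ _).mpr huL)
    ((Submodule.span_singleton_le_iff_mem _ _).mpr hug)
  have hinf_le : L ⊓ g ≤ g := inf_le_right
  have hfr2 : finrank K (L ⊓ g : Submodule K V) ≤ 2 := by
    have := Submodule.finrank_mono (R := K) (M := V) hinf_le
    rw [hg] at this
    exact this
  have hne_inf : L ⊓ g ≠ g := by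
    intro h
    exact hne (st4_line_eq_of_le hg hL (h ▸ inf_le_left : g ≤ L)).symm
  have hfr1 : finrank K (L ⊓ g : Submodule K V) ≤ 1 := by
    rcases Nat.lt_or_ge (finrank K (L ⊓ g : Submodule K V)) 2 with h | h
    · omega
    · exact absurd (Submodule.eq_of_le_of_finrank_le hinf_le (hg ▸ h)) hne_inf
  have heq : (K ∙ u) = L ⊓ g := by
    apply Submodule.eq_of_le_of_finrank_le huLg
    rw [finrank_span_singleton hu0]
    exact hfr1
  refine ⟨⟨hne, ?_⟩, heq.symm⟩
  rw [← heq]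
  simpa [Submodule.span_singleton_eq_bot] using hu0


/-- the point where a line meets another line. -/
lemma st4_point_inf {x y : Submodule K V} (hx : PLine x) (hy : PLine y)
    (hm : PMeets x y) : finrank K (x ⊓ y : Submodule K V) = 1 := by
  have h1 : 1 ≤ finrank K (x ⊓ y : Submodule K V) := st4_finrank_pos hm.2
  have h2 : finrank K (x ⊓ y : Submodule K V) ≤ 2 := by
    have := Submodule.finrank_mono (R := K) (M := V) (inf_le_left : x ⊓ y ≤ x)
    rw [hx] at this; exact this
  rcases Nat.lt_or_ge (finrank K (x ⊓ y : Submodule K V)) 2 with h | h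
  · omega
  · exfalso
    have : x ⊓ y = x := Submodule.eq_of_le_of_finrank_le inf_le_left (hx ▸ h)
    exact hm.1 (st4_line_eq_of_le hx hy (this ▸ inf_le_right : x ≤ y))

lemma st4_le_sup_of_meetsTwo {x y z : Submodule K V} (hx : PLine x) (hy : PLine y)
    (hz : PLine z) (h : PMeetsTwo x y z) : x ≤ y ⊔ z := by
  obtain ⟨hmy, hmz, hne⟩ := h
  have hP : finrank K (x ⊓ y : Submodule K V) = 1 := st4_point_inf hx hy hmy
  have hQ : finrank K (x ⊓ z : Submodule K V) = 1 := st4_point_inf hx hz hmz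
  have hPQ : (x ⊓ y) ⊓ (x ⊓ z) = ⊥ := by
    by_contra hb
    have h1 : 1 ≤ finrank K ((x ⊓ y) ⊓ (x ⊓ z) : Submodule K V) := st4_finrank_pos hb
    have e1 : (x ⊓ y) ⊓ (x ⊓ z) = x ⊓ y :=
      Submodule.eq_of_le_of_finrank_le inf_le_left (by omega)
    have e2 : (x ⊓ y) ⊓ (x ⊓ z) = x ⊓ z :=
      Submodule.eq_of_le_of_finrank_le inf_le_right (by omega)
    exact hne (e1 ▸ e2)
  have hsup : finrank K ((x ⊓ y) ⊔ (x ⊓ z) : Submodule K V) = 2 := by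
    have := Submodule.finrank_sup_add_finrank_inf_eq (x ⊓ y) (x ⊓ z)
    rw [hPQ, finrank_bot, hP, hQ] at this
    omega
  have hle : (x ⊓ y) ⊔ (x ⊓ z) ≤ x := sup_le inf_le_left inf_le_left
  have heq : (x ⊓ y) ⊔ (x ⊓ z) = x :=
    Submodule.eq_of_le_of_finrank_le hle (by rw [hx, hsup])
  rw [← heq]
  exact sup_le (le_sup_of_le_left inf_le_right) (le_sup_of_le_right inf_le_right)

lemma st4_exists_plane (W : Submodule K V) (h : finrank K W + 2 ≤ finrank K V) :
    ∃ p : Submodule K V, PLine p ∧ p ⊓ W = ⊥ := by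
  have hWne : ¬ (⊤ : Submodule K V) ≤ W := by
    intro hle
    have := Submodule.finrank_mono (R := K) (M := V) hle
    rw [finrank_top] at this
    omega
  obtain ⟨v, -, hv⟩ := SetLike.not_le_iff_exists.mp hWne
  have hv0 : v ≠ 0 := fun h0 => hv (h0 ▸ W.zero_mem)
  have hW2 : ¬ (⊤ : Submodule K V) ≤ W ⊔ (K ∙ v) := by
    intro hle
    have h1 := Submodule.finrank_mono (R := K) (M := V) hle
    have h2 := Submodule.finrank_add_le_finrank_add_finrank W (K ∙ v)
    rw [finrank_span_singleton hv0] at h2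
    rw [finrank_top] at h1
    omega
  obtain ⟨w, -, hw⟩ := SetLike.not_le_iff_exists.mp hW2
  have hw0 : w ≠ 0 := fun h0 => hw (h0 ▸ (W ⊔ (K ∙ v)).zero_mem)
  have hUA : (W ⊔ (K ∙ v)) ⊓ (K ∙ w) = ⊥ := by
    rw [eq_bot_iff]
    rintro x ⟨hx1, hx2⟩
    obtain ⟨d, rfl⟩ := Submodule.mem_span_singleton.mp hx2
    rcases eq_or_ne d 0 with rfl | hd
    · simp
    · exfalso
      apply hw
      have : w = d⁻¹ • (d • w) := by rw [smul_smul, inv_mul_cancel₀ hd, one_smul]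
      rw [this]
      exact Submodule.smul_mem _ _ hx1
  have hvU : v ∈ W ⊔ (K ∙ v) :=
    le_sup_right (α := Submodule K V) (Submodule.mem_span_singleton_self v)
  have hwA : w ∈ (K ∙ w) := Submodule.mem_span_singleton_self w
  obtain ⟨hline, hinfU, -⟩ := st4_pairLine hUA hvU hv0 hwA hw0
  refine ⟨Submodule.span K {v, w}, hline, ?_⟩
  rw [eq_bot_iff]
  rintro x ⟨hx1, hx2⟩
  have : x ∈ (K ∙ v) := by
    rw [← hinfU]
    exact ⟨hx1, le_sup_left (α := Submodule K V) hx2⟩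
  obtain ⟨c, rfl⟩ := Submodule.mem_span_singleton.mp this
  rcases eq_or_ne c 0 with rfl | hc
  · simp
  · exfalso
    apply hv
    have : v = c⁻¹ • (c • v) := by rw [smul_smul, inv_mul_cancel₀ hc, one_smul]
    rw [this]
    exact Submodule.smul_mem _ _ hx2

end Aux

section Chains

open Submodule Module

variable {K V : Type*} [DivisionRing K] [AddCommGroup V] [Module K V]
  [FiniteDimensional K V]

open Classical in
/-- next disjoint plane, by choice. -/
noncomputable def st4_nextP (K : Type*) {V : Type*} [DivisionRing K] [AddCommGroup V]
    [Module K V] (W : Submodule K V) : Submodule K V :=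
  if h : ∃ p : Submodule K V, PLine p ∧ p ⊓ W = ⊥ then h.choose else ⊥

lemma st4_nextP_spec {W : Submodule K V} (h : finrank K W + 2 ≤ finrank K V) :
    PLine (st4_nextP K W) ∧ st4_nextP K W ⊓ W = ⊥ := by
  have hex := st4_exists_plane W h
  unfold st4_nextP
  rw [dif_pos hex]
  exact hex.choose_spec

/-- the recursive sequence of subspaces and planes. -/
noncomputable def st4_seq (K : Type*) {V : Type*} [DivisionRing K] [AddCommGroup V]
    [Module K V] (b₁ a₁ : Submodule K V) : ℕ → Submodule K V × Submodule K V
  | 0 => (b₁, a₁)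
  | (k+1) => ((st4_seq K b₁ a₁ k).1 ⊔ (st4_seq K b₁ a₁ k).2,
      st4_nextP K ((st4_seq K b₁ a₁ k).1 ⊔ (st4_seq K b₁ a₁ k).2))

lemma st4_seq_spec {n m : ℕ} (hn : 5 ≤ n) (hnm : n = 2 * m + 1)
    (hdim : finrank K V = n + 1) (b₁ a₁ : Submodule K V)
    (ha₁ : PLine a₁) (hb₁ : PLine b₁) (hdisj : a₁ ⊓ b₁ = ⊥) :
    ∃ Us aa : ℕ → Submodule K V, Us 1 = b₁ ∧ aa 1 = a₁ ∧
      (∀ k, 1 ≤ k → k ≤ m → PLine (aa k) ∧ aa k ⊓ Us k = ⊥ ∧ Us (k+1) = Us k ⊔ aa k) ∧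
      (∀ k, 1 ≤ k → k ≤ m + 1 → finrank K (Us k) = 2 * k) ∧
      Us (m+1) = ⊤ := by
  have hm2 : 2 ≤ m := by omega
  set S := st4_seq K b₁ a₁ with hS
  have hSstep : ∀ j : ℕ, (S (j+1)).1 = (S j).1 ⊔ (S j).2 := fun j => rfl
  have hSstep2 : ∀ j : ℕ, (S (j+1)).2 = st4_nextP K ((S j).1 ⊔ (S j).2) := fun j => rfl
  have claim : ∀ j, j ≤ m - 1 →
      finrank K ((S j).1) = 2 * (j+1) ∧ PLine ((S j).2) ∧ (S j).2 ⊓ (S j).1 = ⊥ := by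
    intro j
    induction j with
    | zero => intro _; exact ⟨by have h0 : (S 0).1 = b₁ := rfl; rw [h0]; exact hb₁, ha₁, hdisj⟩
    | succ j ih =>
      intro hj
      obtain ⟨hfr, hpl, hdj⟩ := ih (by omega)
      have hfr' : finrank K ((S (j+1)).1) = 2 * (j+2) := by
        rw [hSstep j]
        have := Submodule.finrank_sup_add_finrank_inf_eq ((S j).1) ((S j).2)
        rw [inf_comm, hdj, finrank_bot] at this
        rw [hfr] at this
        have hpl' : finrank K ((S j).2) = 2 := hpl
        omega
      have hle : finrank K ((S (j+1)).1) + 2 ≤ finrank K V := by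
        rw [hfr', hdim]; omega
      obtain ⟨h1, h2⟩ := st4_nextP_spec hle
      exact ⟨hfr', by rw [hSstep2 j]; exact h1, by rw [hSstep2 j]; exact h2⟩
  have hfrm : finrank K ((S m).1) = 2 * (m + 1) := by
    obtain ⟨hfr, hpl, hdj⟩ := claim (m-1) (by omega)
    have : m = (m - 1) + 1 := by omega
    rw [this, hSstep (m-1)]
    have := Submodule.finrank_sup_add_finrank_inf_eq ((S (m-1)).1) ((S (m-1)).2)
    rw [inf_comm, hdj, finrank_bot] at this
    have hpl' : finrank K ((S (m-1)).2) = 2 := hpl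
    omega
  refine ⟨fun k => (S (k-1)).1, fun k => (S (k-1)).2, rfl, rfl, ?_, ?_, ?_⟩
  · intro k hk1 hkm
    obtain ⟨hfr, hpl, hdj⟩ := claim (k-1) (by omega)
    refine ⟨hpl, hdj, ?_⟩
    show (S (k+1-1)).1 = (S (k-1)).1 ⊔ (S (k-1)).2
    have : (k + 1) - 1 = (k-1) + 1 := by omega
    rw [this, hSstep (k-1)]
  · intro k hk1 hkm
    show finrank K ((S (k-1)).1) = 2 * k
    rcases Nat.lt_or_ge k (m+1) with h | h
    · obtain ⟨hfr, -, -⟩ := claim (k-1) (by omega)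
      rw [hfr]; omega
    · have hk : k = m + 1 := by omega
      subst hk
      exact hfrm
  · show (S m).1 = ⊤
    apply Submodule.eq_top_of_finrank_eq
    rw [hfrm, hdim]
    omega

end Chains

section ChainBuild

open Submodule Module

variable {K V : Type*} [DivisionRing K] [AddCommGroup V] [Module K V]
  [FiniteDimensional K V]
variable {m : ℕ} {b₁ : Submodule K V} {aa Us : ℕ → Submodule K V}

/-- a valid chain of lines of length `k`. -/
def st4_IsChain (b₁ : Submodule K V) (aa : ℕ → Submodule K V)
    (b : ℕ → Submodule K V) (k : ℕ) : Prop :=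
  b 1 = b₁ ∧ ∀ i, 2 ≤ i → i ≤ k → PLine (b i) ∧ PMeetsTwo (b i) (aa (i-1)) (b (i-1))

lemma st4_plane_ne_bot {x : Submodule K V} (hx : PLine x) : ∃ u ∈ x, u ≠ (0 : V) := by
  apply (Submodule.ne_bot_iff x).mp
  intro h
  rw [PLine, h, finrank_bot] at hx
  omega

lemma st4_extendChain
    (hstep : ∀ k, 1 ≤ k → k ≤ m → PLine (aa k) ∧ aa k ⊓ Us k = ⊥ ∧ Us (k+1) = Us k ⊔ aa k)
    {k : ℕ} (hk1 : 1 ≤ k) (hkm : k ≤ m) {b : ℕ → Submodule K V}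
    (hch : st4_IsChain b₁ aa b k) (hbkU : b k ≤ Us k)
    {r s : V} (hr : r ∈ b k) (hr0 : r ≠ 0) (hs : s ∈ aa k) (hs0 : s ≠ 0) :
    ∃ b' : ℕ → Submodule K V, st4_IsChain b₁ aa b' (k+1) ∧ b' (k+1) ≤ Us (k+1) ∧
      b' (k+1) = Submodule.span K {r, s} := by
  obtain ⟨hpla, hdisj, hsup⟩ := hstep k hk1 hkm
  have hUA : Us k ⊓ aa k = ⊥ := by rw [inf_comm]; exact hdisj
  have hrU : r ∈ Us k := hbkU hr
  obtain ⟨hLline, hinfU, hinfA⟩ := st4_pairLine hUA hrU hr0 hs hs0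
  set L := Submodule.span K {r, s} with hL
  have hrL : r ∈ L := Submodule.subset_span (Set.mem_insert _ _)
  have hsL : s ∈ L := Submodule.subset_span (Set.mem_insert_of_mem _ rfl)
  have hrA : r ∉ aa k := by
    intro h
    have : r ∈ Us k ⊓ aa k := ⟨hrU, h⟩
    rw [hUA, Submodule.mem_bot] at this
    exact hr0 this
  have hsU : s ∉ Us k := by
    intro h
    have : s ∈ Us k ⊓ aa k := ⟨h, hs⟩
    rw [hUA, Submodule.mem_bot] at this
    exact hs0 this
  refine ⟨Function.update b (k+1) L, ⟨?_, ?_⟩, ?_, ?_⟩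
  · rw [Function.update_of_ne (by omega : 1 ≠ k+1)]
    exact hch.1
  · intro i h2i hik
    rcases Nat.lt_or_ge i (k+1) with hi | hi
    · rw [Function.update_of_ne (by omega : i ≠ k+1),
        Function.update_of_ne (by omega : i - 1 ≠ k+1)]
      exact hch.2 i h2i (by omega)
    · have : i = k + 1 := by omega
      subst this
      rw [Function.update_self]
      have hk1' : (k + 1) - 1 = k := by omega
      rw [hk1', Function.update_of_ne (by omega : k ≠ k+1)]
      refine ⟨hLline, ⟨?_, ?_⟩, ⟨?_, ?_⟩, ?_⟩
      · exact fun h => hrA (h ▸ hrL)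
      · rw [hinfA]
        simpa [Submodule.span_singleton_eq_bot] using hs0
      · exact fun h => hsU (hbkU (h ▸ hsL))
      · exact (Submodule.ne_bot_iff _).mpr ⟨r, ⟨hrL, hr⟩, hr0⟩
      · intro h
        have : r ∈ L ⊓ aa k := by
          rw [h]
          exact ⟨hrL, hr⟩
        rw [hinfA] at this
        obtain ⟨c, hc⟩ := Submodule.mem_span_singleton.mp this
        exact hrA (hc ▸ Submodule.smul_mem _ _ hs)
  · rw [Function.update_self, hsup]
    rw [Submodule.span_le]
    rintro x (rfl | rfl)
    · exact le_sup_left (α := Submodule K V) hrU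
    · exact le_sup_right (α := Submodule K V) hs
  · rw [Function.update_self]

lemma st4_Us_mono (hstep : ∀ k, 1 ≤ k → k ≤ m →
      PLine (aa k) ∧ aa k ⊓ Us k = ⊥ ∧ Us (k+1) = Us k ⊔ aa k) :
    ∀ k, 1 ≤ k → k ≤ m + 1 → Us 1 ≤ Us k := by
  intro k
  induction k with
  | zero => omega
  | succ k ih =>
    intro _ hk
    rcases Nat.eq_zero_or_pos k with rfl | hk1
    · exact le_rfl
    · refine le_trans (ih hk1 (by omega)) ?_
      rw [(hstep k hk1 (by omega)).2.2]
      exact le_sup_left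

lemma st4_reach (hb₁ : PLine b₁) (hU1 : Us 1 = b₁)
    (hstep : ∀ k, 1 ≤ k → k ≤ m → PLine (aa k) ∧ aa k ⊓ Us k = ⊥ ∧ Us (k+1) = Us k ⊔ aa k) :
    ∀ k, 1 ≤ k → k ≤ m + 1 → ∀ v ∈ Us k, v ≠ 0 →
      ∃ b : ℕ → Submodule K V, st4_IsChain b₁ aa b k ∧ PLine (b k) ∧ b k ≤ Us k ∧ v ∈ b k := by
  intro k
  induction k with
  | zero => omega
  | succ k ih =>
    intro _ hk v hv hv0
    rcases Nat.eq_zero_or_pos k with rfl | hk1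
    · exact ⟨fun _ => b₁, ⟨rfl, fun i h2i hik => by omega⟩, hb₁, by rw [hU1],
        by rwa [hU1] at hv⟩
    · obtain ⟨hpla, hdisj, hsup⟩ := hstep k hk1 (by omega)
      rw [hsup] at hv
      obtain ⟨p, hp, q, hq, hpq⟩ := Submodule.mem_sup.mp hv
      rcases eq_or_ne q 0 with rfl | hq0
      · -- v = p ∈ Us k
        rw [add_zero] at hpq
        subst hpq
        obtain ⟨b, hch, hbl, hbU, hvb⟩ := ih hk1 (by omega) p hp hv0
        obtain ⟨s₀, hs₀, hs₀0⟩ := st4_plane_ne_bot hpla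
        obtain ⟨b', hch', hle', heq'⟩ :=
          st4_extendChain hstep hk1 (by omega) hch hbU hvb hv0 hs₀ hs₀0
        refine ⟨b', hch', (hch'.2 (k+1) (by omega) le_rfl).1, hle', ?_⟩
        rw [heq']
        exact Submodule.subset_span (Set.mem_insert _ _)
      rcases eq_or_ne p 0 with rfl | hp0
      · -- v = q ∈ aa k
        rw [zero_add] at hpq
        subst hpq
        obtain ⟨u₀, hu₀, hu₀0⟩ := st4_plane_ne_bot hb₁
        have hu₀U : u₀ ∈ Us k := st4_Us_mono hstep k hk1 (by omega) (hU1 ▸ hu₀)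
        obtain ⟨b, hch, hbl, hbU, hub⟩ := ih hk1 (by omega) u₀ hu₀U hu₀0
        obtain ⟨b', hch', hle', heq'⟩ :=
          st4_extendChain hstep hk1 (by omega) hch hbU hub hu₀0 hq hv0
        refine ⟨b', hch', (hch'.2 (k+1) (by omega) le_rfl).1, hle', ?_⟩
        rw [heq']
        exact Submodule.subset_span (Set.mem_insert_of_mem _ rfl)
      · -- both components nonzero
        obtain ⟨b, hch, hbl, hbU, hpb⟩ := ih hk1 (by omega) p hp hp0
        obtain ⟨b', hch', hle', heq'⟩ :=
          st4_extendChain hstep hk1 (by omega) hch hbU hpb hp0 hq hq0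
        refine ⟨b', hch', (hch'.2 (k+1) (by omega) le_rfl).1, hle', ?_⟩
        rw [heq', ← hpq]
        exact Submodule.add_mem _ (Submodule.subset_span (Set.mem_insert _ _))
          (Submodule.subset_span (Set.mem_insert_of_mem _ rfl))

lemma st4_final (hb₁ : PLine b₁) (hU1 : Us 1 = b₁) (hm1 : 1 ≤ m)
    (hstep : ∀ k, 1 ≤ k → k ≤ m → PLine (aa k) ∧ aa k ⊓ Us k = ⊥ ∧ Us (k+1) = Us k ⊔ aa k)
    {r s : V} (hr : r ∈ Us m) (hr0 : r ≠ 0) (hs : s ∈ aa m) (hs0 : s ≠ 0) :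
    ∃ b : ℕ → Submodule K V, st4_IsChain b₁ aa b (m+1) ∧
      b (m+1) = Submodule.span K {r, s} := by
  obtain ⟨b, hch, hbl, hbU, hrb⟩ := st4_reach hb₁ hU1 hstep m hm1 (by omega) r hr hr0
  obtain ⟨b', hch', hle', heq'⟩ := st4_extendChain hstep hm1 le_rfl hch hbU hrb hr0 hs hs0
  exact ⟨b', hch', heq'⟩

end ChainBuild

open Submodule Module in
theorem statement4 {K V : Type*} [DivisionRing K] [AddCommGroup V] [Module K V]
    {n m : ℕ} (hn : 5 ≤ n) (hodd : Odd n) (hm : m = (n - 1) / 2)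
    (hdim : Module.finrank K V = n + 1)
    (a₁ b₁ : Submodule K V) (ha₁ : PLine a₁) (hb₁ : PLine b₁) :
    (a₁ = b₁ ∨ a₁ ⊓ b₁ = ⊥) ↔
    (a₁ = b₁ ∨ ∃ a : ℕ → Submodule K V, a 1 = a₁ ∧
      (∀ i, 2 ≤ i → i ≤ m → PLine (a i)) ∧
      ∀ g : Submodule K V, PLine g → ∃ b c : ℕ → Submodule K V, b 1 = b₁ ∧ c 1 = b₁ ∧
        (∀ i, 2 ≤ i → i ≤ m + 1 → PLine (b i) ∧ PLine (c i)) ∧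
        (∀ i, 2 ≤ i → i ≤ m + 1 →
          PMeetsTwo (b i) (a (i - 1)) (b (i - 1)) ∧ PMeetsTwo (c i) (a (i - 1)) (c (i - 1))) ∧
        PMeets (b (m + 1)) g ∧ PMeets (c (m + 1)) g ∧ b (m + 1) ⊓ g ≠ c (m + 1) ⊓ g) := by
  have hfd : FiniteDimensional K V := FiniteDimensional.of_finrank_pos (by rw [hdim]; omega)
  obtain ⟨t, ht⟩ := hodd
  have hnm : n = 2 * m + 1 := by omega
  have hm2 : 2 ≤ m := by omega
  constructor
  · -- (i) → (ii)
    rintro (heq | hdisj)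
    · exact Or.inl heq
    right
    obtain ⟨Us, aa, hU1, haa1, hstep, hfr, hUtop⟩ :=
      st4_seq_spec hn hnm hdim b₁ a₁ ha₁ hb₁ hdisj
    refine ⟨aa, haa1, fun i h2 him => (hstep i (by omega) him).1, ?_⟩
    intro g hg
    obtain ⟨hplA, hdisjA, hsupA⟩ := hstep m (by omega) le_rfl
    have hUA : Us m ⊓ aa m = ⊥ := by rw [inf_comm]; exact hdisjA
    have htop : Us m ⊔ aa m = ⊤ := by rw [← hsupA]; exact hUtop
    have hUm_not_le : ¬ Us m ≤ g := by
      intro h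
      have h1 := Submodule.finrank_mono (R := K) (M := V) h
      rw [hfr m (by omega) (by omega), hg] at h1
      omega
    have buildOne : ∀ r s u : V, r ∈ Us m → r ≠ 0 → s ∈ aa m → s ≠ 0 →
        u ∈ Submodule.span K {r, s} → u ∈ g → u ≠ 0 → Submodule.span K {r, s} ≠ g →
        ∃ b : ℕ → Submodule K V, b 1 = b₁ ∧
          (∀ i, 2 ≤ i → i ≤ m+1 → PLine (b i)) ∧
          (∀ i, 2 ≤ i → i ≤ m+1 → PMeetsTwo (b i) (aa (i-1)) (b (i-1))) ∧
          PMeets (b (m+1)) g ∧ b (m+1) ⊓ g = (K ∙ u) := by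
      intro r s u hr hr0 hs hs0 huL hug hu0 hLg
      obtain ⟨b, hch, hbeq⟩ := st4_final hb₁ hU1 (by omega) hstep hr hr0 hs hs0
      have hplL : PLine (b (m+1)) := (hch.2 (m+1) (by omega) le_rfl).1
      obtain ⟨hme, hinfeq⟩ := st4_inf_line (L := b (m+1)) hplL hg
        (by rw [hbeq]; exact hLg) (by rw [hbeq]; exact huL) hug hu0
      exact ⟨b, hch.1, fun i h2 hi => (hch.2 i h2 hi).1,
        fun i h2 hi => (hch.2 i h2 hi).2, hme, hinfeq⟩
    by_cases hsplit : ∃ p₀ q₀ : V, p₀ ∈ Us m ∧ p₀ ≠ 0 ∧ q₀ ∈ aa m ∧ q₀ ≠ 0 ∧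
        g = Submodule.span K {p₀, q₀}
    · -- g is split by the decomposition
      obtain ⟨p₀, q₀, hp₀, hp₀0, hq₀, hq₀0, hgspan⟩ := hsplit
      have hp₀g : p₀ ∈ g := by
        rw [hgspan]; exact Submodule.subset_span (Set.mem_insert _ _)
      have hq₀g : q₀ ∈ g := by
        rw [hgspan]; exact Submodule.subset_span (Set.mem_insert_of_mem _ rfl)
      have hAg : ¬ aa m ≤ g := by
        intro h
        have : aa m = g := st4_line_eq_of_le hplA hg h
        have : p₀ ∈ Us m ⊓ aa m := ⟨hp₀, this ▸ hp₀g⟩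
        rw [hUA, Submodule.mem_bot] at this
        exact hp₀0 this
      obtain ⟨s, hsA, hsg⟩ := SetLike.not_le_iff_exists.mp hAg
      have hs0 : s ≠ 0 := fun h => hsg (h ▸ g.zero_mem)
      obtain ⟨r, hrU, hrg⟩ := SetLike.not_le_iff_exists.mp hUm_not_le
      have hr0 : r ≠ 0 := fun h => hrg (h ▸ g.zero_mem)
      obtain ⟨b, hb1, hbpl, hbmt, hbme, hbinf⟩ := buildOne p₀ s p₀ hp₀ hp₀0 hsA hs0
        (Submodule.subset_span (Set.mem_insert _ _)) hp₀g hp₀0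
        (fun h => hsg (h ▸ Submodule.subset_span (Set.mem_insert_of_mem _ rfl)))
      obtain ⟨c, hc1, hcpl, hcmt, hcme, hcinf⟩ := buildOne r q₀ q₀ hrU hr0 hq₀ hq₀0
        (Submodule.subset_span (Set.mem_insert_of_mem _ rfl)) hq₀g hq₀0
        (fun h => hrg (h ▸ Submodule.subset_span (Set.mem_insert _ _)))
      refine ⟨b, c, hb1, hc1, fun i h2 hi => ⟨hbpl i h2 hi, hcpl i h2 hi⟩,
        fun i h2 hi => ⟨hbmt i h2 hi, hcmt i h2 hi⟩, hbme, hcme, ?_⟩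
      rw [hbinf, hcinf]
      intro h
      have : p₀ ∈ (K ∙ q₀) := h ▸ Submodule.mem_span_singleton_self p₀
      obtain ⟨d, hd⟩ := Submodule.mem_span_singleton.mp this
      have : p₀ ∈ Us m ⊓ aa m := ⟨hp₀, hd ▸ Submodule.smul_mem _ _ hq₀⟩
      rw [hUA, Submodule.mem_bot] at this
      exact hp₀0 this
    · -- g is not split
      obtain ⟨u, hug, hu0⟩ := st4_plane_ne_bot hg
      have hgu : ¬ g ≤ (K ∙ u) := by
        intro h
        have h1 := Submodule.finrank_mono (R := K) (M := V) h
        rw [hg, finrank_span_singleton hu0] at h1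
        omega
      obtain ⟨w, hwg, hwu⟩ := SetLike.not_le_iff_exists.mp hgu
      have hw0 : w ≠ 0 := fun h => hwu (h ▸ (K ∙ u).zero_mem)
      have pointChain : ∀ u' : V, u' ∈ g → u' ≠ 0 →
          ∃ r s : V, r ∈ Us m ∧ r ≠ 0 ∧ s ∈ aa m ∧ s ≠ 0 ∧
            u' ∈ Submodule.span K {r, s} ∧ Submodule.span K {r, s} ≠ g := by
        intro u' hu' hu'0
        have hmem : u' ∈ Us m ⊔ aa m := by rw [htop]; trivial
        obtain ⟨p, hp, q, hq, hpq⟩ := Submodule.mem_sup.mp hmem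
        rcases eq_or_ne q 0 with rfl | hq0
        · rw [add_zero] at hpq
          subst hpq
          have hAg : ¬ aa m ≤ g := by
            intro h
            have heqA : aa m = g := st4_line_eq_of_le hplA hg h
            have : p ∈ Us m ⊓ aa m := ⟨hp, heqA ▸ hu'⟩
            rw [hUA, Submodule.mem_bot] at this
            exact hu'0 this
          obtain ⟨s, hsA, hsg⟩ := SetLike.not_le_iff_exists.mp hAg
          have hs0 : s ≠ 0 := fun h => hsg (h ▸ g.zero_mem)
          exact ⟨p, s, hp, hu'0, hsA, hs0,
            Submodule.subset_span (Set.mem_insert _ _),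
            fun h => hsg (h ▸ Submodule.subset_span (Set.mem_insert_of_mem _ rfl))⟩
        rcases eq_or_ne p 0 with rfl | hp0
        · rw [zero_add] at hpq
          subst hpq
          obtain ⟨r, hrU, hrg⟩ := SetLike.not_le_iff_exists.mp hUm_not_le
          have hr0 : r ≠ 0 := fun h => hrg (h ▸ g.zero_mem)
          exact ⟨r, q, hrU, hr0, hq, hu'0,
            Submodule.subset_span (Set.mem_insert_of_mem _ rfl),
            fun h => hrg (h ▸ Submodule.subset_span (Set.mem_insert _ _))⟩
        · refine ⟨p, q, hp, hp0, hq, hq0, ?_, ?_⟩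
          · rw [← hpq]
            exact Submodule.add_mem _ (Submodule.subset_span (Set.mem_insert _ _))
              (Submodule.subset_span (Set.mem_insert_of_mem _ rfl))
          · intro h
            exact hsplit ⟨p, q, hp, hp0, hq, hq0, h.symm⟩
      obtain ⟨r, s, hr, hr0, hs, hs0, huL, hLg⟩ := pointChain u hug hu0
      obtain ⟨r', s', hr', hr'0, hs', hs'0, hwL, hLg'⟩ := pointChain w hwg hw0
      obtain ⟨b, hb1, hbpl, hbmt, hbme, hbinf⟩ :=
        buildOne r s u hr hr0 hs hs0 huL hug hu0 hLg
      obtain ⟨c, hc1, hcpl, hcmt, hcme, hcinf⟩ :=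
        buildOne r' s' w hr' hr'0 hs' hs'0 hwL hwg hw0 hLg'
      refine ⟨b, c, hb1, hc1, fun i h2 hi => ⟨hbpl i h2 hi, hcpl i h2 hi⟩,
        fun i h2 hi => ⟨hbmt i h2 hi, hcmt i h2 hi⟩, hbme, hcme, ?_⟩
      rw [hbinf, hcinf]
      intro h
      exact hwu (h ▸ Submodule.mem_span_singleton_self w)
  · -- (ii) → (i)
    rintro (heq | ⟨aa, haa1, hplaa, hgprop⟩)
    · exact Or.inl heq
    by_cases heq : a₁ = b₁
    · exact Or.inl heq
    right
    by_contra hne_bot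
    -- the joined space W of b₁, a₁, ..., a_m has dimension at most n
    set Ws : ℕ → Submodule K V :=
      fun t => Nat.rec (b₁ ⊔ aa 1) (fun j Wj => Wj ⊔ aa (j+2)) t with hWsdef
    have hWsS : ∀ t, Ws (t+1) = Ws t ⊔ aa (t+2) := fun t => rfl
    have hWfr : ∀ t, t ≤ m - 1 → finrank K (Ws t) ≤ 2*t + 3 := by
      intro t
      induction t with
      | zero =>
        intro _
        have hsum := Submodule.finrank_sup_add_finrank_inf_eq b₁ (aa 1)
        have hne : b₁ ⊓ aa 1 ≠ ⊥ := by
          rw [haa1, inf_comm]; exact hne_bot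
        have h1 := st4_finrank_pos hne
        have hfa : finrank K (aa 1) = 2 := by rw [haa1]; exact ha₁
        have hfb : finrank K b₁ = 2 := hb₁
        show finrank K (Ws 0) ≤ 3
        have : Ws 0 = b₁ ⊔ aa 1 := rfl
        rw [this]
        omega
      | succ t ih =>
        intro htm
        have hsum := Submodule.finrank_add_le_finrank_add_finrank (Ws t) (aa (t+2))
        have hfa : finrank K (aa (t+2)) = 2 := hplaa (t+2) (by omega) (by omega)
        have := ih (by omega)
        rw [hWsS t]
        omega
    have hWle : ∀ t t', t ≤ t' → Ws t ≤ Ws t' := by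
      intro t t' h
      induction t', h using Nat.le_induction with
      | base => exact le_rfl
      | succ t' h ih => exact ih.trans (le_sup_left.trans_eq (hWsS t').symm)
    set W := Ws (m-1) with hW
    have hb₁W : b₁ ≤ W := le_trans le_sup_left (hWle 0 (m-1) (by omega))
    have haaW : ∀ j, 1 ≤ j → j ≤ m → aa j ≤ W := by
      intro j hj1 hjm
      rcases Nat.lt_or_ge j 2 with hj | hj
      · have : j = 1 := by omega
        subst this
        exact le_trans le_sup_right (hWle 0 (m-1) (by omega))
      · have hj' : j = (j - 2) + 2 := by omega
        have h1 : aa j ≤ Ws (j-2+1) := by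
          rw [hWsS (j-2), ← hj']
          exact le_sup_right
        have h2 : (j - 2) + 1 ≤ m - 1 := by omega
        exact h1.trans (hWle _ _ h2)
    -- plane existence facts for chain elements
    have hplaa' : ∀ j, 1 ≤ j → j ≤ m → PLine (aa j) := by
      intro j hj1 hjm
      rcases Nat.lt_or_ge j 2 with hj | hj
      · have : j = 1 := by omega
        subst this
        rw [haa1]; exact ha₁
      · exact hplaa j hj hjm
    have hchainle : ∀ (bb : ℕ → Submodule K V), bb 1 = b₁ →
        (∀ i, 2 ≤ i → i ≤ m+1 → PLine (bb i)) →
        (∀ i, 2 ≤ i → i ≤ m+1 → PMeetsTwo (bb i) (aa (i-1)) (bb (i-1))) →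
        ∀ i, 1 ≤ i → i ≤ m+1 → bb i ≤ W := by
      intro bb hbb1 hbpl hbmt i
      induction i with
      | zero => omega
      | succ i ih =>
        intro _ hi
        rcases Nat.eq_zero_or_pos i with rfl | hi1
        · rw [hbb1]; exact hb₁W
        have hplbi : PLine (bb i) := by
          rcases Nat.lt_or_ge i 2 with h | h
          · have : i = 1 := by omega
            subst this
            rw [hbb1]; exact hb₁
          · exact hbpl i h (by omega)
        have hplai : PLine (aa i) := hplaa' i hi1 (by omega)
        have hplb1 : PLine (bb (i+1)) := hbpl (i+1) (by omega) hi
        have hmt : PMeetsTwo (bb (i+1)) (aa i) (bb i) := by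
          have := hbmt (i+1) (by omega) hi
          simpa using this
        have hle := st4_le_sup_of_meetsTwo hplb1 hplai hplbi hmt
        exact hle.trans (sup_le (haaW i hi1 (by omega)) (ih hi1 (by omega)))
    -- pick a line not inside W
    have hWfrm : finrank K W ≤ n := by
      have := hWfr (m-1) le_rfl
      rw [← hW] at this
      omega
    have hWtop : ¬ (⊤ : Submodule K V) ≤ W := by
      intro h
      have := Submodule.finrank_mono (R := K) (M := V) h
      rw [finrank_top, hdim] at this
      omega
    obtain ⟨v, -, hv⟩ := SetLike.not_le_iff_exists.mp hWtop
    have hv0 : v ≠ 0 := fun h => hv (h ▸ W.zero_mem)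
    have hKv : ¬ (⊤ : Submodule K V) ≤ (K ∙ v) := by
      intro h
      have := Submodule.finrank_mono (R := K) (M := V) h
      rw [finrank_top, hdim, finrank_span_singleton hv0] at this
      omega
    obtain ⟨w, -, hw⟩ := SetLike.not_le_iff_exists.mp hKv
    have hw0 : w ≠ 0 := fun h => hw (h ▸ (K ∙ v).zero_mem)
    have hvw : (K ∙ v) ⊓ (K ∙ w) = ⊥ := st4_span_singleton_inf hw
    obtain ⟨hgline, -, -⟩ := st4_pairLine hvw (Submodule.mem_span_singleton_self v) hv0
      (Submodule.mem_span_singleton_self w) hw0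
    set g := Submodule.span K {v, w} with hgdef
    have hvg : v ∈ g := Submodule.subset_span (Set.mem_insert _ _)
    obtain ⟨bb, cc, hb1, hc1, hpl, hmt, hPb, hPc, hne⟩ := hgprop g hgline
    have hbW : bb (m+1) ≤ W := hchainle bb hb1 (fun i h2 hi => (hpl i h2 hi).1)
      (fun i h2 hi => (hmt i h2 hi).1) (m+1) (by omega) le_rfl
    have hcW : cc (m+1) ≤ W := hchainle cc hc1 (fun i h2 hi => (hpl i h2 hi).2)
      (fun i h2 hi => (hmt i h2 hi).2) (m+1) (by omega) le_rfl
    have hXg : W ⊓ g ≠ g := by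
      intro h
      apply hv
      have hgW : g ≤ W := by rw [← h]; exact inf_le_left
      exact hgW hvg
    have hXfr : finrank K (W ⊓ g : Submodule K V) ≤ 1 := by
      rcases Nat.lt_or_ge (finrank K (W ⊓ g : Submodule K V)) 2 with h | h
      · omega
      · exact absurd (Submodule.eq_of_le_of_finrank_le inf_le_right (hgline ▸ h)) hXg
    have hkey : ∀ L : Submodule K V, L ≤ W → PMeets L g → L ⊓ g = W ⊓ g := by
      intro L hLW hLme
      have hle : L ⊓ g ≤ W ⊓ g := inf_le_inf_right g hLW
      have h1 : 1 ≤ finrank K (L ⊓ g : Submodule K V) := st4_finrank_pos hLme.2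
      exact Submodule.eq_of_le_of_finrank_le hle (by omega)
    exact hne ((hkey _ hbW hPb).trans (hkey _ hcW hPc).symm)
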